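/- The lattice analogues of Kausch's sl(2) generators form sl(2) triples of symmetries of the Hamiltonian: for every odd integer n (positive or negative), [S^z, ẽ_n] = 2 ẽ_n, [S^z, f̃_n] = −2 f̃_n, [ẽ_n, f̃_n] = S^z, and both ẽ_n and f̃_n commute with the Hamiltonian: [ẽ_n, H] = 0 and [f̃_n, H] = 0. -/

import Mathlib

section CAR

variable {I A : Type*} [DecidableEq I] [Ring A]
variable (θ θd : I → A)

/-- Reorder `θd a * θd b * θ c` into normally ordered form. -/
lemma car_ddc
    (Hdc : ∀ a b, θd a * θ b = (if b = a then (1:A) else 0) - θ b * θd a)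
    (a b c : I) :
    θd a * θd b * θ c =
      (if c = b then θd a else 0) - (if c = a then θd b else 0) + θ c * (θd a * θd b) := by
  calc θd a * θd b * θ c = θd a * (θd b * θ c) := by rw [mul_assoc]
    _ = θd a * ((if c = b then (1:A) else 0) - θ c * θd b) := by rw [Hdc b c]
    _ = (if c = b then θd a else 0) - (θd a * θ c) * θd b := by split_ifs <;> noncomm_ring
    _ = (if c = b then θd a else 0) - ((if c = a then (1:A) else 0) - θ c * θd a) * θd b := by
        rw [Hdc a c]
    _ = _ := by split_ifs <;> noncomm_ring

/-- Commutator of a pair of creation operators with a pair of annihilation operators. -/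
lemma car_eeff
    (Hdc : ∀ a b, θd a * θ b = (if b = a then (1:A) else 0) - θ b * θd a)
    (a b c d : I) :
    θd a * θd b * (θ c * θ d) - θ c * θ d * (θd a * θd b) =
      ((if c = b then θd a * θ d else 0) - (if c = a then θd b * θ d else 0)) +
      ((if d = b then θ c * θd a else 0) - (if d = a then θ c * θd b else 0)) := by
  have h1 := car_ddc θ θd Hdc a b c
  have h2 := car_ddc θ θd Hdc a b d
  calc θd a * θd b * (θ c * θ d) - θ c * θ d * (θd a * θd b)
      = (θd a * θd b * θ c) * θ d - θ c * θ d * (θd a * θd b) := by noncomm_ring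
    _ = ((if c = b then θd a else 0) - (if c = a then θd b else 0) + θ c * (θd a * θd b)) * θ d
          - θ c * θ d * (θd a * θd b) := by rw [h1]
    _ = ((if c = b then θd a else 0) * θ d - (if c = a then θd b else 0) * θ d)
          + θ c * (θd a * θd b * θ d) - θ c * θ d * (θd a * θd b) := by noncomm_ring
    _ = ((if c = b then θd a else 0) * θ d - (if c = a then θd b else 0) * θ d)
          + θ c * ((if d = b then θd a else 0) - (if d = a then θd b else 0) + θ d * (θd a * θd b))
          - θ c * θ d * (θd a * θd b) := by rw [h2]
    _ = _ := by split_ifs <;> noncomm_ring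

/-- Commutator of a pair of creation operators with a hopping term. -/
lemma car_eeH
    (Hcd : ∀ a b, θ a * θd b = (if a = b then (1:A) else 0) - θd b * θ a)
    (Hdd : ∀ a b, θd a * θd b = -(θd b * θd a))
    (a b c e : I) :
    θd c * θ e * (θd a * θd b) - θd a * θd b * (θd c * θ e) =
      (if e = a then θd c * θd b else 0) + (if e = b then θd a * θd c else 0) := by
  have e2 : ∀ x, θd c * θ e * θd x = (if e = x then θd c else 0) + θd x * (θd c * θ e) := by
    intro x
    calc θd c * θ e * θd x = θd c * (θ e * θd x) := by rw [mul_assoc]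
      _ = θd c * ((if e = x then (1:A) else 0) - θd x * θ e) := by rw [Hcd e x]
      _ = (if e = x then θd c else 0) - (θd c * θd x) * θ e := by split_ifs <;> noncomm_ring
      _ = (if e = x then θd c else 0) - (-(θd x * θd c)) * θ e := by rw [Hdd c x]
      _ = _ := by split_ifs <;> noncomm_ring
  calc θd c * θ e * (θd a * θd b) - θd a * θd b * (θd c * θ e)
      = (θd c * θ e * θd a) * θd b - θd a * θd b * (θd c * θ e) := by noncomm_ring
    _ = ((if e = a then θd c else 0) + θd a * (θd c * θ e)) * θd b
          - θd a * θd b * (θd c * θ e) := by rw [e2 a]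
    _ = (if e = a then θd c else 0) * θd b + θd a * (θd c * θ e * θd b)
          - θd a * θd b * (θd c * θ e) := by noncomm_ring
    _ = (if e = a then θd c else 0) * θd b
          + θd a * ((if e = b then θd c else 0) + θd b * (θd c * θ e))
          - θd a * θd b * (θd c * θ e) := by rw [e2 b]
    _ = _ := by split_ifs <;> noncomm_ring

/-- Commutator of a pair of annihilation operators with a hopping term. -/
lemma car_ffH
    (Hcd : ∀ a b, θ a * θd b = (if a = b then (1:A) else 0) - θd b * θ a)
    (Hcc : ∀ a b, θ a * θ b = -(θ b * θ a))
    (a b c e : I) :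
    θ a * θ b * (θd c * θ e) - θd c * θ e * (θ a * θ b) =
      (if b = c then θ a * θ e else 0) - (if a = c then θ b * θ e else 0) := by
  have h1 : θ a * θ b * θd c =
      (if b = c then θ a else 0) - (if a = c then θ b else 0) + θd c * (θ a * θ b) := by
    calc θ a * θ b * θd c = θ a * (θ b * θd c) := by rw [mul_assoc]
      _ = θ a * ((if b = c then (1:A) else 0) - θd c * θ b) := by rw [Hcd b c]
      _ = (if b = c then θ a else 0) - (θ a * θd c) * θ b := by split_ifs <;> noncomm_ring
      _ = (if b = c then θ a else 0) - ((if a = c then (1:A) else 0) - θd c * θ a) * θ b := by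
          rw [Hcd a c]
      _ = _ := by split_ifs <;> noncomm_ring
  have h3 : θ e * (θ a * θ b) = θ a * θ b * θ e := by
    calc θ e * (θ a * θ b) = (θ e * θ a) * θ b := by rw [mul_assoc]
      _ = (-(θ a * θ e)) * θ b := by rw [Hcc e a]
      _ = -(θ a * (θ e * θ b)) := by noncomm_ring
      _ = -(θ a * (-(θ b * θ e))) := by rw [Hcc e b]
      _ = _ := by noncomm_ring
  calc θ a * θ b * (θd c * θ e) - θd c * θ e * (θ a * θ b)
      = (θ a * θ b * θd c) * θ e - θd c * (θ e * (θ a * θ b)) := by noncomm_ring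
    _ = ((if b = c then θ a else 0) - (if a = c then θ b else 0) + θd c * (θ a * θ b)) * θ e
          - θd c * (θ e * (θ a * θ b)) := by rw [h1]
    _ = ((if b = c then θ a else 0) - (if a = c then θ b else 0) + θd c * (θ a * θ b)) * θ e
          - θd c * (θ a * θ b * θ e) := by rw [h3]
    _ = _ := by split_ifs <;> noncomm_ring

end CAR

/-- **Lattice analogues of Kausch's sl(2) generators are symmetries of the
Hamiltonian:** for the antiperiodic momenta `p_m = (2m−1)π/N` (`N = 2L`,
labelled by `m : Fin N ↦ m+1`, with `−p` and `p+π` taken modulo 2π inside the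
set of momenta), the operators `ẽ_n := (1/2)Σ_p (sin p)^n θ_p† θ_{−p}†` and
`f̃_n := (1/2)Σ_p (sin p)^{−n} θ_{−p} θ_p`, for every odd integer `n`, satisfy
`[S^z, ẽ_n] = 2ẽ_n`, `[S^z, f̃_n] = −2f̃_n`, `[ẽ_n, f̃_n] = S^z`, and commute
with `H := 2 Σ_p (1 + sin p) θ_p† θ_{p+π}`, where
`S^z := Σ_p θ_p† θ_p − L·1`. -/
theorem lattice_kausch_sl2_symmetry
    (L : ℕ) (hL : 0 < L)
    (A : Type*) [Ring A] [Algebra ℂ A]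
    (θ θd : Fin (2 * L) → A)
    -- canonical anticommutation relations
    (hθθ : ∀ m m', θ m * θ m' + θ m' * θ m = 0)
    (hθdθd : ∀ m m', θd m * θd m' + θd m' * θd m = 0)
    (hθθd : ∀ m m', θ m * θd m' + θd m' * θ m = if m = m' then (1 : A) else 0)
    -- the momenta p_m = (2m−1)π/N
    (p : Fin (2 * L) → ℝ)
    (hp : ∀ m, p m = (2 * ((m : ℕ) : ℝ) + 1) * Real.pi / (2 * L))
    -- the index realising −p modulo 2π
    (neg : Fin (2 * L) → Fin (2 * L))
    (hneg : ∀ m, ((neg m : ℕ)) = 2 * L - 1 - (m : ℕ))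
    -- the index realising p+π modulo 2π
    (shift : Fin (2 * L) → Fin (2 * L))
    (hshift : ∀ m, ((shift m : ℕ)) = ((m : ℕ) + L) % (2 * L))
    (H Sz : A) (en fn : ℤ → A)
    (hH : H = (2 : ℂ) • ∑ m : Fin (2 * L),
      (((1 + Real.sin (p m)) : ℝ) : ℂ) • (θd m * θ (shift m)))
    (hSz : Sz = (∑ m : Fin (2 * L), θd m * θ m) - (L : ℂ) • (1 : A))
    (hen : ∀ n : ℤ, en n = ((1 : ℂ)/2) • ∑ m : Fin (2 * L),
      (((Real.sin (p m)) ^ n : ℝ) : ℂ) • (θd m * θd (neg m)))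
    (hfn : ∀ n : ℤ, fn n = ((1 : ℂ)/2) • ∑ m : Fin (2 * L),
      (((Real.sin (p m)) ^ (-n) : ℝ) : ℂ) • (θ (neg m) * θ m)) :
    ∀ n : ℤ, Odd n →
      ⁅Sz, en n⁆ = (2 : ℂ) • en n ∧
      ⁅Sz, fn n⁆ = (-2 : ℂ) • fn n ∧
      ⁅en n, fn n⁆ = Sz ∧
      ⁅en n, H⁆ = 0 ∧
      ⁅fn n, H⁆ = 0 := by
  intro n hn
  -- ### index combinatorics
  have hshift' : ∀ m : Fin (2*L), (shift m : ℕ) =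
      if (m:ℕ) < L then (m:ℕ) + L else (m:ℕ) - L := by
    intro m
    have hm := m.isLt
    rw [hshift]
    rcases lt_or_ge (m:ℕ) L with h | h
    · rw [if_pos h, Nat.mod_eq_of_lt (by omega)]
    · rw [if_neg (by omega), Nat.mod_eq_sub_mod (by omega), Nat.mod_eq_of_lt (by omega)]
      omega
  have hnn : ∀ m, neg (neg m) = m := by
    intro m; apply Fin.ext; rw [hneg, hneg]; have := m.isLt; omega
  have hss : ∀ m, shift (shift m) = m := by
    intro m; apply Fin.ext; rw [hshift' (shift m), hshift' m]
    have := m.isLt; split_ifs <;> omega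
  have hsn : ∀ m, shift (neg m) = neg (shift m) := by
    intro m; apply Fin.ext
    rw [hneg (shift m), hshift' (neg m), hneg m, hshift' m]
    have := m.isLt; split_ifs <;> omega
  have hnm : ∀ m, neg m ≠ m := by
    intro m h
    have h2 := congrArg Fin.val h
    rw [hneg] at h2; have := m.isLt; omega
  have hninj : ∀ a b, neg a = neg b → a = b := by
    intro a b h; rw [← hnn a, h, hnn]
  have hbijs : Function.Bijective shift := Function.Involutive.bijective hss
  -- ### trigonometric facts
  have hsneg : ∀ m, Real.sin (p (neg m)) = - Real.sin (p m) := by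
    intro m
    have hm := m.isLt
    have h1 : p (neg m) = 2 * Real.pi - p m := by
      rw [hp, hp, hneg]
      have hk : ((2 * L - 1 - (m:ℕ) : ℕ) : ℝ) = 2 * (L:ℝ) - 1 - ((m:ℕ):ℝ) := by
        have h0 : (2 * L - 1 - (m:ℕ)) + ((m:ℕ) + 1) = 2 * L := by omega
        have h2 := congrArg (Nat.cast (R := ℝ)) h0
        push_cast at h2
        linarith
      rw [hk]
      have hL0 : ((L:ℝ)) ≠ 0 := by positivity
      field_simp
      ring
    rw [h1, Real.sin_sub, Real.sin_two_pi, Real.cos_two_pi]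
    ring
  have hsshift : ∀ m, Real.sin (p (shift m)) = - Real.sin (p m) := by
    intro m
    have hm := m.isLt
    have hL0 : ((L:ℝ)) ≠ 0 := by positivity
    rcases lt_or_ge (m:ℕ) L with h | h
    · have h1 : p (shift m) = p m + Real.pi := by
        rw [hp, hp, hshift' m, if_pos h]
        push_cast
        field_simp
        ring
      rw [h1, Real.sin_add_pi]
    · have h1 : p (shift m) = p m - Real.pi := by
        rw [hp, hp, hshift' m, if_neg (by omega)]
        have hk : (((m:ℕ) - L : ℕ) : ℝ) = ((m:ℕ):ℝ) - (L:ℝ) := by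
          have h0 : ((m:ℕ) - L) + L = (m:ℕ) := by omega
          have h2 := congrArg (Nat.cast (R := ℝ)) h0
          push_cast at h2
          linarith
        rw [hk]
        field_simp
        ring
      rw [h1, Real.sin_sub, Real.sin_pi, Real.cos_pi]
      ring
  have hs0 : ∀ m, Real.sin (p m) ≠ 0 := by
    intro m hsin
    have hm := m.isLt
    rw [Real.sin_eq_zero_iff] at hsin
    obtain ⟨k, hk⟩ := hsin
    rw [hp] at hk
    have hk2 : (k:ℝ) * (2 * L) = 2 * (m:ℕ) + 1 := by
      have hpi := Real.pi_ne_zero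
      have hL0 : ((L:ℝ)) ≠ 0 := by positivity
      field_simp at hk
      linarith [hk]
    have hk3 : (k * (2 * L) : ℤ) = 2 * (m:ℕ) + 1 := by exact_mod_cast hk2
    have hdvd : (2:ℤ) ∣ k * (2 * L) := ⟨k * L, by ring⟩
    rw [hk3] at hdvd
    omega
  -- ### scalar coefficient identities
  have hc1 : ∀ m, ((Real.sin (p m) ^ n : ℝ):ℂ) * ((Real.sin (p m) ^ (-n) : ℝ):ℂ) = 1 := by
    intro m
    rw [← Complex.ofReal_mul, ← zpow_add₀ (hs0 m)]
    simp
  have hc2 : ∀ m, ((Real.sin (p m) ^ n : ℝ):ℂ) * ((Real.sin (p (neg m)) ^ (-n) : ℝ):ℂ) = -1 := by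
    intro m
    have h := hc1 m
    rw [hsneg m, Odd.neg_zpow (Odd.neg hn)]
    push_cast at h ⊢
    rw [mul_neg, h]
  have hc4 : ∀ m, ((Real.sin (p (shift m)) ^ n : ℝ):ℂ) * ((1 + Real.sin (p (neg m)) :ℝ):ℂ)
      = -(((Real.sin (p m) ^ n : ℝ):ℂ) * ((1 + Real.sin (p (shift m)) :ℝ):ℂ)) := by
    intro m
    rw [hsshift m, hsneg m, Odd.neg_zpow hn]
    push_cast
    ring
  have hc5 : ∀ m, ((Real.sin (p (shift m)) ^ (-n) : ℝ):ℂ) * ((1 + Real.sin (p (shift m)) :ℝ):ℂ)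
      = -(((Real.sin (p m) ^ (-n) : ℝ):ℂ) * ((1 + Real.sin (p (neg m)) :ℝ):ℂ)) := by
    intro m
    rw [hsshift m, hsneg m, Odd.neg_zpow (Odd.neg hn)]
    push_cast
    ring
  -- ### algebraic consequences of the CAR
  have Hdd : ∀ a b, θd a * θd b = -(θd b * θd a) := fun a b =>
    eq_neg_of_add_eq_zero_left (hθdθd a b)
  have Hcc : ∀ a b, θ a * θ b = -(θ b * θ a) := fun a b =>
    eq_neg_of_add_eq_zero_left (hθθ a b)
  have Hcd : ∀ a b, θ a * θd b = (if a = b then (1:A) else 0) - θd b * θ a := fun a b =>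
    eq_sub_of_add_eq (hθθd a b)
  have Hdc : ∀ a b, θd a * θ b = (if b = a then (1:A) else 0) - θ b * θd a := fun a b =>
    eq_sub_of_add_eq (by rw [add_comm]; exact hθθd b a)
  have hnum : ∀ a, θ a * θd a = 1 - θd a * θ a := fun a => by simpa using Hcd a a
  have comm1 : ∀ X : A, Sz * X - X * Sz =
      (∑ k, θd k * θ k) * X - X * (∑ k, θd k * θ k) := by
    intro X; rw [hSz]
    simp only [sub_mul, mul_sub, smul_mul_assoc, mul_smul_comm, one_mul, mul_one]
    abel
  have key_e : ∀ a b : Fin (2*L),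
      (∑ k, θd k * θ k) * (θd a * θd b) - (θd a * θd b) * (∑ k, θd k * θ k)
      = (θd a * θd b) + (θd a * θd b) := by
    intro a b
    rw [Finset.sum_mul, Finset.mul_sum, ← Finset.sum_sub_distrib]
    rw [Finset.sum_congr rfl (fun k _ => car_eeH θ θd Hcd Hdd a b k k)]
    rw [Finset.sum_add_distrib, Finset.sum_ite_eq', Finset.sum_ite_eq']
    simp
  have key_f : ∀ a b : Fin (2*L),
      (∑ k, θd k * θ k) * (θ a * θ b) - (θ a * θ b) * (∑ k, θd k * θ k)
      = -((θ a * θ b) + (θ a * θ b)) := by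
    intro a b
    rw [Finset.sum_mul, Finset.mul_sum, ← Finset.sum_sub_distrib]
    have hstep : ∀ k ∈ (Finset.univ : Finset (Fin (2*L))),
        θd k * θ k * (θ a * θ b) - (θ a * θ b) * (θd k * θ k)
        = -((if b = k then θ a * θ k else 0) - (if a = k then θ b * θ k else 0)) := by
      intro k _
      rw [← car_ffH θ θd Hcd Hcc a b k k, neg_sub]
    rw [Finset.sum_congr rfl hstep]
    rw [Finset.sum_neg_distrib, Finset.sum_sub_distrib, Finset.sum_ite_eq, Finset.sum_ite_eq]
    simp only [Finset.mem_univ, if_true]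
    rw [Hcc b a]
    abel
  refine ⟨?_, ?_, ?_, ?_, ?_⟩
  -- ### [Sz, en] = 2 en
  · rw [Ring.lie_def, comm1, hen n]
    rw [mul_smul_comm, smul_mul_assoc, ← smul_sub, Finset.mul_sum, Finset.sum_mul,
      ← Finset.sum_sub_distrib]
    rw [Finset.sum_congr rfl (fun m _ => by
      rw [mul_smul_comm, smul_mul_assoc, ← smul_sub, key_e m (neg m)])]
    simp only [smul_add]
    rw [Finset.sum_add_distrib]
    module
  -- ### [Sz, fn] = -2 fn
  · rw [Ring.lie_def, comm1, hfn n]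
    rw [mul_smul_comm, smul_mul_assoc, ← smul_sub, Finset.mul_sum, Finset.sum_mul,
      ← Finset.sum_sub_distrib]
    rw [Finset.sum_congr rfl (fun m _ => by
      rw [mul_smul_comm, smul_mul_assoc, ← smul_sub, key_f (neg m) m])]
    simp only [smul_neg, smul_add]
    rw [Finset.sum_neg_distrib, Finset.sum_add_distrib]
    module
  -- ### [en, fn] = Sz
  · have inner3 : ∀ m : Fin (2*L),
        ((Real.sin (p m) ^ n : ℝ) : ℂ) •
          ((θd m * θd (neg m)) * (∑ k, ((Real.sin (p k) ^ (-n) : ℝ):ℂ) • (θ (neg k) * θ k))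
           - (∑ k, ((Real.sin (p k) ^ (-n) : ℝ):ℂ) • (θ (neg k) * θ k)) * (θd m * θd (neg m)))
        = ((2:ℂ)•(θd m * θ m) + (2:ℂ)•(θd (neg m) * θ (neg m))) - (2:ℂ)•(1:A) := by
      intro m
      rw [Finset.mul_sum, Finset.sum_mul, ← Finset.sum_sub_distrib]
      have hterm : ∀ k ∈ (Finset.univ : Finset (Fin (2*L))),
          (θd m * θd (neg m)) * (((Real.sin (p k) ^ (-n) : ℝ):ℂ) • (θ (neg k) * θ k))
            - (((Real.sin (p k) ^ (-n) : ℝ):ℂ) • (θ (neg k) * θ k)) * (θd m * θd (neg m))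
          = (if k = m then ((Real.sin (p k) ^ (-n) : ℝ):ℂ) •
                (θd m * θ k - θ (neg k) * θd (neg m)) else 0)
            + (if k = neg m then ((Real.sin (p k) ^ (-n) : ℝ):ℂ) •
                (θ (neg k) * θd m - θd (neg m) * θ k) else 0) := by
        intro k _
        rw [mul_smul_comm, smul_mul_assoc, ← smul_sub, car_eeff θ θd Hdc m (neg m) (neg k) k]
        by_cases h1 : k = m
        · subst h1
          have h2 : k ≠ neg k := fun h => (hnm k) h.symm
          simp only [if_pos rfl, if_neg (hnm k), if_neg h2]
          simp [smul_sub, smul_add, sub_eq_add_neg]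
        · by_cases h2 : k = neg m
          · subst h2
            have h4 : m ≠ neg m := fun h => hnm m h.symm
            simp only [hnn, if_neg h4, if_neg (hnm m), if_pos rfl]
            simp [smul_sub, smul_add, sub_eq_add_neg]
            abel
          · have e1 : neg k ≠ neg m := fun h => h1 (hninj _ _ h)
            have e2 : neg k ≠ m := fun h => h2 (by rw [← h, hnn])
            simp [e1, e2, h1, h2]
      rw [Finset.sum_congr rfl hterm, Finset.sum_add_distrib, Finset.sum_ite_eq',
        Finset.sum_ite_eq']
      simp only [Finset.mem_univ, if_true]
      rw [smul_add, smul_smul, smul_smul, hc1 m, hc2 m, one_smul, neg_one_smul, hnn m]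
      rw [hnum (neg m), hnum m]
      module
    rw [Ring.lie_def, hen n, hfn n, hSz]
    simp only [smul_mul_assoc, mul_smul_comm, smul_smul]
    rw [← smul_sub]
    rw [Finset.sum_mul, Finset.mul_sum, ← Finset.sum_sub_distrib]
    rw [Finset.sum_congr rfl (fun m _ => by
      rw [smul_mul_assoc, mul_smul_comm, ← smul_sub, inner3 m])]
    rw [Finset.sum_sub_distrib, Finset.sum_add_distrib]
    have hb : (∑ m, (2:ℂ)•(θd (neg m) * θ (neg m))) = ∑ m, (2:ℂ)•(θd m * θ m) :=
      Fintype.sum_bijective neg (Function.Involutive.bijective hnn) _ _ (fun m => rfl)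
    rw [hb]
    rw [Finset.sum_const, Finset.card_univ, Fintype.card_fin, ← Nat.cast_smul_eq_nsmul ℂ,
      ← Finset.smul_sum, smul_smul]
    push_cast
    module
  -- ### [en, H] = 0
  · have hmain4 :
        (∑ m : Fin (2*L), (((Real.sin (p m)) ^ n : ℝ) : ℂ) • (θd m * θd (neg m))) *
          (∑ m : Fin (2*L), (((1 + Real.sin (p m)) : ℝ) : ℂ) • (θd m * θ (shift m)))
        - (∑ m : Fin (2*L), (((1 + Real.sin (p m)) : ℝ) : ℂ) • (θd m * θ (shift m))) *
          (∑ m : Fin (2*L), (((Real.sin (p m)) ^ n : ℝ) : ℂ) • (θd m * θd (neg m))) = 0 := by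
      rw [Finset.sum_mul, Finset.mul_sum, ← Finset.sum_sub_distrib]
      have hterm : ∀ m ∈ (Finset.univ : Finset (Fin (2*L))),
          ((((Real.sin (p m)) ^ n : ℝ) : ℂ) • (θd m * θd (neg m))) *
            (∑ k, (((1 + Real.sin (p k)) : ℝ) : ℂ) • (θd k * θ (shift k)))
          - (∑ k, (((1 + Real.sin (p k)) : ℝ) : ℂ) • (θd k * θ (shift k))) *
            ((((Real.sin (p m)) ^ n : ℝ) : ℂ) • (θd m * θd (neg m)))
          = -( (((Real.sin (p m) ^ n : ℝ):ℂ) * ((1 + Real.sin (p (shift m)) :ℝ):ℂ)) •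
                 (θd (shift m) * θd (neg m))
              + (((Real.sin (p m) ^ n : ℝ):ℂ) * ((1 + Real.sin (p (shift (neg m))) :ℝ):ℂ)) •
                 (θd m * θd (shift (neg m))) ) := by
        intro m _
        rw [smul_mul_assoc, mul_smul_comm, ← smul_sub]
        rw [Finset.mul_sum, Finset.sum_mul, ← Finset.sum_sub_distrib]
        have hk : ∀ k ∈ (Finset.univ : Finset (Fin (2*L))),
            (θd m * θd (neg m)) * ((((1 + Real.sin (p k)) : ℝ) : ℂ) • (θd k * θ (shift k)))
            - ((((1 + Real.sin (p k)) : ℝ) : ℂ) • (θd k * θ (shift k))) * (θd m * θd (neg m))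
            = -((if k = shift m then
                  (((1 + Real.sin (p k)) : ℝ) : ℂ) • (θd k * θd (neg m)) else 0)
              + (if k = shift (neg m) then
                  (((1 + Real.sin (p k)) : ℝ) : ℂ) • (θd m * θd k) else 0)) := by
          intro k _
          rw [mul_smul_comm, smul_mul_assoc, ← smul_sub]
          have h := car_eeH θ θd Hcd Hdd m (neg m) k (shift k)
          have h' : (θd m * θd (neg m)) * (θd k * θ (shift k))
              - (θd k * θ (shift k)) * (θd m * θd (neg m))
              = -((if shift k = m then θd k * θd (neg m) else 0)
                + (if shift k = neg m then θd m * θd k else 0)) := by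
            rw [← h]; abel
          rw [h']
          have c1 : (shift k = m) = (k = shift m) :=
            propext ⟨fun h => by rw [← h, hss], fun h => by rw [h, hss]⟩
          have c2 : (shift k = neg m) = (k = shift (neg m)) :=
            propext ⟨fun h => by rw [← h, hss], fun h => by rw [h, hss]⟩
          simp only [c1, c2]
          split_ifs <;> simp [smul_add, smul_neg]
        rw [Finset.sum_congr rfl hk, Finset.sum_neg_distrib, Finset.sum_add_distrib,
          Finset.sum_ite_eq', Finset.sum_ite_eq']
        simp only [Finset.mem_univ, if_true]
        rw [smul_neg, smul_add, smul_smul, smul_smul]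
      rw [Finset.sum_congr rfl hterm]
      rw [Finset.sum_neg_distrib, neg_eq_zero, Finset.sum_add_distrib]
      have hrev : (∑ m : Fin (2*L),
            (((Real.sin (p m) ^ n : ℝ):ℂ) * ((1 + Real.sin (p (shift (neg m))) :ℝ):ℂ)) •
              (θd m * θd (shift (neg m))))
          = ∑ m : Fin (2*L),
            (((Real.sin (p (shift m)) ^ n : ℝ):ℂ) *
              ((1 + Real.sin (p (shift (neg (shift m)))) :ℝ):ℂ)) •
              (θd (shift m) * θd (shift (neg (shift m)))) :=
        (Fintype.sum_bijective shift hbijs _ _ (fun m => rfl)).symm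
      rw [hrev]
      have hterm2 : ∀ m ∈ (Finset.univ : Finset (Fin (2*L))),
          (((Real.sin (p (shift m)) ^ n : ℝ):ℂ) *
            ((1 + Real.sin (p (shift (neg (shift m)))) :ℝ):ℂ)) •
            (θd (shift m) * θd (shift (neg (shift m))))
          = -((((Real.sin (p m) ^ n : ℝ):ℂ) * ((1 + Real.sin (p (shift m)) :ℝ):ℂ)) •
              (θd (shift m) * θd (neg m))) := by
        intro m _
        have hidx : shift (neg (shift m)) = neg m := by rw [hsn, hss]
        rw [hidx, hc4 m, neg_smul]
      rw [Finset.sum_congr rfl hterm2, Finset.sum_neg_distrib]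
      abel
    rw [Ring.lie_def, hen n, hH]
    simp only [smul_mul_assoc, mul_smul_comm, smul_smul]
    rw [sub_eq_zero]
    rw [sub_eq_zero.mp hmain4]
    module
  -- ### [fn, H] = 0
  · have hmain5 :
        (∑ m : Fin (2*L), (((Real.sin (p m)) ^ (-n) : ℝ) : ℂ) • (θ (neg m) * θ m)) *
          (∑ m : Fin (2*L), (((1 + Real.sin (p m)) : ℝ) : ℂ) • (θd m * θ (shift m)))
        - (∑ m : Fin (2*L), (((1 + Real.sin (p m)) : ℝ) : ℂ) • (θd m * θ (shift m))) *
          (∑ m : Fin (2*L), (((Real.sin (p m)) ^ (-n) : ℝ) : ℂ) • (θ (neg m) * θ m)) = 0 := by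
      rw [Finset.sum_mul, Finset.mul_sum, ← Finset.sum_sub_distrib]
      have hterm : ∀ m ∈ (Finset.univ : Finset (Fin (2*L))),
          ((((Real.sin (p m)) ^ (-n) : ℝ) : ℂ) • (θ (neg m) * θ m)) *
            (∑ k, (((1 + Real.sin (p k)) : ℝ) : ℂ) • (θd k * θ (shift k)))
          - (∑ k, (((1 + Real.sin (p k)) : ℝ) : ℂ) • (θd k * θ (shift k))) *
            ((((Real.sin (p m)) ^ (-n) : ℝ) : ℂ) • (θ (neg m) * θ m))
          = (((Real.sin (p m) ^ (-n) : ℝ):ℂ) * ((1 + Real.sin (p m) :ℝ):ℂ)) •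
               (θ (neg m) * θ (shift m))
            - (((Real.sin (p m) ^ (-n) : ℝ):ℂ) * ((1 + Real.sin (p (neg m)) :ℝ):ℂ)) •
               (θ m * θ (shift (neg m))) := by
        intro m _
        rw [smul_mul_assoc, mul_smul_comm, ← smul_sub]
        rw [Finset.mul_sum, Finset.sum_mul, ← Finset.sum_sub_distrib]
        have hk : ∀ k ∈ (Finset.univ : Finset (Fin (2*L))),
            (θ (neg m) * θ m) * ((((1 + Real.sin (p k)) : ℝ) : ℂ) • (θd k * θ (shift k)))
            - ((((1 + Real.sin (p k)) : ℝ) : ℂ) • (θd k * θ (shift k))) * (θ (neg m) * θ m)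
            = (if m = k then
                (((1 + Real.sin (p k)) : ℝ) : ℂ) • (θ (neg m) * θ (shift k)) else 0)
              - (if neg m = k then
                (((1 + Real.sin (p k)) : ℝ) : ℂ) • (θ m * θ (shift k)) else 0) := by
          intro k _
          rw [mul_smul_comm, smul_mul_assoc, ← smul_sub,
            car_ffH θ θd Hcd Hcc (neg m) m k (shift k)]
          split_ifs <;> simp [smul_sub]
        rw [Finset.sum_congr rfl hk, Finset.sum_sub_distrib,
          Finset.sum_ite_eq, Finset.sum_ite_eq]
        simp only [Finset.mem_univ, if_true]
        rw [smul_sub, smul_smul, smul_smul]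
      rw [Finset.sum_congr rfl hterm, Finset.sum_sub_distrib, sub_eq_zero]
      have hrev : (∑ m : Fin (2*L),
            (((Real.sin (p m) ^ (-n) : ℝ):ℂ) * ((1 + Real.sin (p m) :ℝ):ℂ)) •
              (θ (neg m) * θ (shift m)))
          = ∑ m : Fin (2*L),
            (((Real.sin (p (shift m)) ^ (-n) : ℝ):ℂ) * ((1 + Real.sin (p (shift m)) :ℝ):ℂ)) •
              (θ (neg (shift m)) * θ (shift (shift m))) :=
        (Fintype.sum_bijective shift hbijs _ _ (fun m => rfl)).symm
      rw [hrev]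
      refine Finset.sum_congr rfl (fun m _ => ?_)
      rw [hss m, show neg (shift m) = shift (neg m) from (hsn m).symm, hc5 m,
        Hcc (shift (neg m)) m]
      rw [neg_smul, smul_neg, neg_neg]
    rw [Ring.lie_def, hfn n, hH]
    simp only [smul_mul_assoc, mul_smul_comm, smul_smul]
    rw [sub_eq_zero]
    rw [sub_eq_zero.mp hmain5]
    module
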